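/- Let g be a positive definite form of degree d on ℝⁿ and let μ_g be the Lebesgue measure restricted to G = {g ≤ 1}. Then for every form h of degree d, ∫_G |h(x)| g(x) dx = ((n+d)/(n+2d)) ∫_G |h(x)| dx. -/

import Mathlib

open MeasureTheory MvPolynomial Set Filter

lemma eval_smul_homog {n d : ℕ} (p : MvPolynomial (Fin n) ℝ) (hp : p.IsHomogeneous d)
    (c : ℝ) (x : Fin n → ℝ) : eval (c • x) p = c ^ d * eval x p := by
  rw [eval_eq, eval_eq, Finset.mul_sum]
  refine Finset.sum_congr rfl fun m hm => ?_
  have hdeg : ∑ i ∈ m.support, m i = d := by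
    have := hp (MvPolynomial.mem_support_iff.mp hm)
    simpa [Finsupp.weight, Finsupp.linearCombination, Finsupp.sum] using this
  calc p.coeff m * ∏ i ∈ m.support, (c • x) i ^ m i
      = p.coeff m * ∏ i ∈ m.support, (c ^ m i * x i ^ m i) := by
        simp [Pi.smul_apply, mul_pow]
    _ = c ^ d * (p.coeff m * ∏ i ∈ m.support, x i ^ m i) := by
        rw [Finset.prod_mul_distrib, Finset.prod_pow_eq_pow_sum, hdeg]; ring

lemma scale_lemma (n d e : ℕ) (hd : 1 ≤ d) (g h : MvPolynomial (Fin n) ℝ)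
    (hg : g.IsHomogeneous d) (hh : h.IsHomogeneous e) {t : ℝ} (ht : 0 < t) :
    ∫ x in {x : Fin n → ℝ | eval x g ≤ t}, |eval x h|
      = t ^ (((n : ℝ) + e) / d) * ∫ x in {x : Fin n → ℝ | eval x g ≤ 1}, |eval x h| := by
  have hd0 : (d : ℝ) ≠ 0 := Nat.cast_ne_zero.mpr (by omega)
  set c : ℝ := t ^ ((1 : ℝ) / d) with hc_def
  have hc : 0 < c := Real.rpow_pos_of_pos ht _
  have hcpow : ∀ m : ℕ, c ^ m = t ^ ((m : ℝ) / d) := by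
    intro m
    rw [hc_def, ← Real.rpow_natCast (t ^ ((1:ℝ)/d)) m, ← Real.rpow_mul ht.le]
    congr 1; field_simp
  have hcd : c ^ d = t := by rw [hcpow d, div_self hd0, Real.rpow_one]
  set f : (Fin n → ℝ) → ℝ := Set.indicator {x : Fin n → ℝ | eval x g ≤ 1}
    (fun x => |eval x h|) with hf_def
  have hmeas : ∀ s : ℝ, MeasurableSet {x : Fin n → ℝ | eval x g ≤ s} := fun s =>
    measurableSet_le (MvPolynomial.continuous_eval g).measurable measurable_const
  have key := MeasureTheory.Measure.integral_comp_smul_of_nonneg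
    (volume : Measure (Fin n → ℝ)) f c⁻¹ (hR := (inv_pos.mpr hc).le)
  have hpt : (fun x => f (c⁻¹ • x))
      = Set.indicator {x : Fin n → ℝ | eval x g ≤ t} (fun x => (c⁻¹) ^ e * |eval x h|) := by
    funext x
    have hgx : eval (c⁻¹ • x) g = (c⁻¹) ^ d * eval x g := eval_smul_homog g hg _ x
    have hhx : eval (c⁻¹ • x) h = (c⁻¹) ^ e * eval x h := eval_smul_homog h hh _ x
    have hiff : eval (c⁻¹ • x) g ≤ 1 ↔ eval x g ≤ t := by
      rw [hgx, inv_pow, ← hcd]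
      rw [inv_mul_le_iff₀ (by positivity), mul_one]
    by_cases hx : eval x g ≤ t
    · rw [hf_def, Set.indicator_of_mem (show (c⁻¹ • x) ∈ {x : Fin n → ℝ | eval x g ≤ 1} from hiff.mpr hx),
        Set.indicator_of_mem (show x ∈ {x : Fin n → ℝ | eval x g ≤ t} from hx), hhx,
        abs_mul, abs_of_pos (show (0:ℝ) < c⁻¹ ^ e by positivity)]
    · rw [hf_def, Set.indicator_of_notMem (show (c⁻¹ • x) ∉ {x : Fin n → ℝ | eval x g ≤ 1} from fun hmem => hx (hiff.mp hmem)),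
        Set.indicator_of_notMem (show x ∉ {x : Fin n → ℝ | eval x g ≤ t} from hx)]
  rw [hpt] at key
  rw [integral_indicator (hmeas t), integral_const_mul] at key
  rw [hf_def, integral_indicator (hmeas 1)] at key
  have hfin : (Module.finrank ℝ (Fin n → ℝ)) = n := Module.finrank_fin_fun ℝ
  rw [hfin, smul_eq_mul, inv_pow, inv_pow, inv_inv,
    inv_mul_eq_iff_eq_mul₀ (show (c:ℝ)^e ≠ 0 by positivity)] at key
  rw [key, hcpow n, hcpow e, ← mul_assoc, ← Real.rpow_add ht]
  rw [show (e:ℝ)/d + n/d = ((n:ℝ)+e)/d by ring]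

lemma eval_zero_homog {n d : ℕ} (p : MvPolynomial (Fin n) ℝ) (hp : p.IsHomogeneous d)
    (hd : 1 ≤ d) : eval 0 p = 0 := by
  have := eval_smul_homog p hp 0 0
  simpa [zero_pow (show d ≠ 0 by omega)] using this

lemma compact_G (n d : ℕ) (hn : 1 ≤ n) (hd : 1 ≤ d) (g : MvPolynomial (Fin n) ℝ)
    (hg : g.IsHomogeneous d) (hgpos : ∀ x : Fin n → ℝ, x ≠ 0 → 0 < eval x g) :
    IsCompact {x : Fin n → ℝ | eval x g ≤ 1} := by
  haveI : Nonempty (Fin n) := ⟨⟨0, hn⟩⟩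
  obtain ⟨x₀, hx₀⟩ : (Metric.sphere (0 : Fin n → ℝ) 1).Nonempty :=
    NormedSpace.sphere_nonempty.mpr zero_le_one
  obtain ⟨z, hzS, hz⟩ := (isCompact_sphere (0 : Fin n → ℝ) 1).exists_isMinOn ⟨x₀, hx₀⟩
    (MvPolynomial.continuous_eval g).continuousOn
  rw [isMinOn_iff] at hz
  have hznorm : ‖z‖ = 1 := by simpa using hzS
  have hm : 0 < eval z g := hgpos z (by intro hz0; rw [hz0] at hznorm; simp at hznorm)
  set m : ℝ := eval z g with hm_def
  have lower : ∀ x : Fin n → ℝ, m * ‖x‖ ^ d ≤ eval x g := by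
    intro x
    rcases eq_or_ne x 0 with rfl | hx
    · rw [eval_zero_homog g hg hd, norm_zero, zero_pow (show d ≠ 0 by omega), mul_zero]
    · have hnx : 0 < ‖x‖ := norm_pos_iff.mpr hx
      have hu : (‖x‖⁻¹ • x) ∈ Metric.sphere (0 : Fin n → ℝ) 1 := by
        simp [norm_smul, abs_of_pos (inv_pos.mpr hnx), inv_mul_cancel₀ hnx.ne']
      have hle := hz _ hu
      rw [eval_smul_homog g hg _ x] at hle
      have h2 : (‖x‖⁻¹) ^ d * ‖x‖ ^ d = 1 := by
        rw [← mul_pow, inv_mul_cancel₀ hnx.ne', one_pow]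
      calc m * ‖x‖ ^ d ≤ ((‖x‖⁻¹) ^ d * eval x g) * ‖x‖ ^ d := by
            apply mul_le_mul_of_nonneg_right hle (pow_nonneg hnx.le d)
        _ = eval x g := by rw [mul_comm ((‖x‖⁻¹)^d) (eval x g), mul_assoc, h2, mul_one]
  have hsub : {x : Fin n → ℝ | eval x g ≤ 1} ⊆ Metric.closedBall 0 (max 1 m⁻¹) := by
    intro x hx
    rw [Metric.mem_closedBall, dist_zero_right]
    by_cases h1 : ‖x‖ ≤ 1
    · exact le_trans h1 (le_max_left _ _)
    · push_neg at h1
      refine le_trans ?_ (le_max_right _ _)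
      have hxd : ‖x‖ ≤ ‖x‖ ^ d := le_self_pow₀ h1.le (by omega)
      have h3 : m * ‖x‖ ≤ 1 := by
        calc m * ‖x‖ ≤ m * ‖x‖ ^ d := by nlinarith
          _ ≤ eval x g := lower x
          _ ≤ 1 := hx
      rw [← mul_le_mul_iff_right₀ hm, mul_inv_cancel₀ hm.ne']
      exact h3
  exact Metric.isCompact_of_isClosed_isBounded
    (isClosed_le (MvPolynomial.continuous_eval g) continuous_const)
    (Metric.isBounded_closedBall.subset hsub)

theorem stmt9 (n d : ℕ) (hn : 1 ≤ n) (hd : 1 ≤ d)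
    (g h : MvPolynomial (Fin n) ℝ) (hg : g.IsHomogeneous d)
    (hgpos : ∀ x : Fin n → ℝ, x ≠ 0 → 0 < eval x g)
    (hh : h.IsHomogeneous d) :
    ∫ x in {x : Fin n → ℝ | eval x g ≤ 1}, |eval x h| * eval x g
      = (((n : ℝ) + d) / ((n : ℝ) + 2 * d)) *
          ∫ x in {x : Fin n → ℝ | eval x g ≤ 1}, |eval x h| := by
  have hd0 : (0 : ℝ) < d := by exact_mod_cast hd
  have hgA : ∀ x : Fin n → ℝ, 0 ≤ eval x g := by
    intro x
    rcases eq_or_ne x 0 with rfl | hx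
    · rw [eval_zero_homog g hg hd]
    · exact (hgpos x hx).le
  have hGm : ∀ s : ℝ, MeasurableSet {x : Fin n → ℝ | eval x g ≤ s} := fun s =>
    measurableSet_le (MvPolynomial.continuous_eval g).measurable measurable_const
  have hGc : IsCompact {x : Fin n → ℝ | eval x g ≤ 1} := compact_G n d hn hd g hg hgpos
  set q : ℝ := ((n : ℝ) + d) / d with hq_def
  have hq0 : 0 < q := by positivity
  set A : ℝ := ∫ x in {x : Fin n → ℝ | eval x g ≤ 1}, |eval x h| with hA_def
  have hA0 : 0 ≤ A := setIntegral_nonneg (hGm 1) fun x _ => abs_nonneg _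
  have hIntH : IntegrableOn (fun x => |eval x h|) {x : Fin n → ℝ | eval x g ≤ 1} :=
    ((MvPolynomial.continuous_eval h).abs).continuousOn.integrableOn_compact hGc
  have hIntHG : IntegrableOn (fun x => |eval x h| * eval x g)
      {x : Fin n → ℝ | eval x g ≤ 1} :=
    (((MvPolynomial.continuous_eval h).abs).mul
      (MvPolynomial.continuous_eval g)).continuousOn.integrableOn_compact hGc
  have hscale : ∀ t : ℝ, 0 < t →
      ∫ x in {x : Fin n → ℝ | eval x g ≤ t}, |eval x h| = t ^ q * A := by
    intro t ht
    have := scale_lemma n d d hd g h hg hh ht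
    rw [this, hq_def]
  set w : (Fin n → ℝ) → ENNReal := fun x => ENNReal.ofReal |eval x h| with hw_def
  have hwm : Measurable w := ((MvPolynomial.continuous_eval h).abs.measurable).ennreal_ofReal
  set ν : Measure (Fin n → ℝ) :=
    (volume.restrict {x : Fin n → ℝ | eval x g ≤ 1}).withDensity w with hν_def
  have hν_apply : ∀ s : Set (Fin n → ℝ), MeasurableSet s →
      ν s = ∫⁻ x in s ∩ {x : Fin n → ℝ | eval x g ≤ 1}, w x := by
    intro s hs
    rw [hν_def, withDensity_apply _ hs, Measure.restrict_restrict hs]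
  have hν_le : ∀ t : ℝ, 0 < t → t ≤ 1 →
      ν {x : Fin n → ℝ | eval x g ≤ t} = ENNReal.ofReal (t ^ q * A) := by
    intro t ht ht1
    have hsub : {x : Fin n → ℝ | eval x g ≤ t} ∩ {x : Fin n → ℝ | eval x g ≤ 1}
        = {x : Fin n → ℝ | eval x g ≤ t} := by
      ext x
      simp only [mem_inter_iff, mem_setOf_eq, and_iff_left_iff_imp]
      intro hx; linarith
    rw [hν_apply _ (hGm t), hsub, ← hscale t ht]
    exact (ofReal_integral_eq_lintegral_ofReal
      (hIntH.mono_set (fun x (hx : eval x g ≤ t) => le_trans hx ht1))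
      (Eventually.of_forall fun x => abs_nonneg _)).symm
  have hν_univ : ν univ = ENNReal.ofReal A := by
    rw [hν_apply _ MeasurableSet.univ, univ_inter, hA_def]
    exact (ofReal_integral_eq_lintegral_ofReal hIntH
      (Eventually.of_forall fun x => abs_nonneg _)).symm
  have hν_lt : ∀ t : ℝ, 0 < t → t ≤ 1 →
      ν {x : Fin n → ℝ | eval x g < t} = ENNReal.ofReal (t ^ q * A) := by
    intro t ht ht1
    set s : ℕ → ℝ := fun k => t * (1 - 1 / (k + 2)) with hs_def
    have hfrac : ∀ k : ℕ, 1 / ((k : ℝ) + 2) < 1 := by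
      intro k
      rw [div_lt_one (by positivity)]
      have : (0:ℝ) ≤ (k:ℝ) := Nat.cast_nonneg k
      linarith
    have hfrac0 : ∀ k : ℕ, (0:ℝ) < 1 / ((k : ℝ) + 2) := fun k => by positivity
    have hs_pos : ∀ k, 0 < s k := fun k =>
      mul_pos ht (by linarith [hfrac k])
    have hs_lt : ∀ k, s k < t := fun k =>
      mul_lt_of_lt_one_right ht (by linarith [hfrac0 k])
    have hs_le1 : ∀ k, s k ≤ 1 := fun k => le_trans (hs_lt k).le ht1
    have hs_mono : Monotone s := by
      intro a b hab
      have hc : ((a:ℝ) + 2) ≤ (b:ℝ) + 2 := by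
        have := (Nat.cast_le (α := ℝ)).mpr hab; linarith
      have : (1:ℝ) / ((b:ℝ) + 2) ≤ 1 / ((a:ℝ) + 2) :=
        one_div_le_one_div_of_le (by positivity) hc
      have h1 : (1:ℝ) - 1/((a:ℝ)+2) ≤ 1 - 1/((b:ℝ)+2) := by linarith
      exact mul_le_mul_of_nonneg_left h1 ht.le
    have hSmono : Monotone fun k => {x : Fin n → ℝ | eval x g ≤ s k} := by
      intro a b hab x hx
      exact le_trans hx (hs_mono hab)
    have hst : Tendsto s atTop (nhds t) := by
      have h2 : Tendsto (fun k : ℕ => ((k : ℝ) + 2)) atTop atTop :=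
        tendsto_atTop_add_const_right _ 2 tendsto_natCast_atTop_atTop
      have h3 : Tendsto (fun k : ℕ => 1 / ((k : ℝ) + 2)) atTop (nhds 0) :=
        tendsto_const_nhds.div_atTop h2
      have h4 : Tendsto (fun k : ℕ => t * (1 - 1 / ((k:ℝ) + 2))) atTop (nhds (t * (1 - 0))) :=
        tendsto_const_nhds.mul (tendsto_const_nhds.sub h3)
      have h5 : t * (1 - (0:ℝ)) = t := by ring
      rw [h5] at h4
      exact h4
    have hUnion : {x : Fin n → ℝ | eval x g < t} = ⋃ k, {x : Fin n → ℝ | eval x g ≤ s k} := by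
      ext x
      simp only [mem_setOf_eq, mem_iUnion]
      constructor
      · intro hx
        have := hst.eventually (eventually_ge_nhds (show eval x g < t from hx))
        obtain ⟨k, hk⟩ := this.exists
        exact ⟨k, hk⟩
      · rintro ⟨k, hk⟩
        exact lt_of_le_of_lt hk (hs_lt k)
    rw [hUnion]
    have hT := tendsto_measure_iUnion_atTop (μ := ν) hSmono
    have hT2 : Tendsto (fun k => ν {x : Fin n → ℝ | eval x g ≤ s k}) atTop
        (nhds (ENNReal.ofReal (t ^ q * A))) := by
      have heq : ∀ k, ν {x : Fin n → ℝ | eval x g ≤ s k} = ENNReal.ofReal ((s k) ^ q * A) :=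
        fun k => hν_le _ (hs_pos k) (hs_le1 k)
      simp only [heq]
      have hrpow : Tendsto (fun k => (s k) ^ q * A) atTop (nhds (t ^ q * A)) := by
        have : Tendsto (fun u : ℝ => u ^ q * A) (nhds t) (nhds (t ^ q * A)) :=
          ((Real.continuousAt_rpow_const t q (Or.inl ht.ne')).mul continuousAt_const)
        exact this.comp hst
      exact (ENNReal.continuous_ofReal.tendsto _).comp hrpow
    exact tendsto_nhds_unique hT hT2
  have hν_ge : ∀ t : ℝ, t ∈ Ioi (0:ℝ) →
      ν {x : Fin n → ℝ | t ≤ eval x g}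
        = Set.indicator (Ioc (0:ℝ) 1) (fun t => ENNReal.ofReal ((1 - t ^ q) * A)) t := by
    intro t ht
    rw [mem_Ioi] at ht
    by_cases ht1 : t ≤ 1
    · rw [indicator_of_mem (show t ∈ Ioc (0:ℝ) 1 from ⟨ht, ht1⟩)]
      have hcompl : {x : Fin n → ℝ | t ≤ eval x g} = {x : Fin n → ℝ | eval x g < t}ᶜ := by
        ext x; simp [not_lt]
      rw [hcompl, measure_compl
        (measurableSet_lt (MvPolynomial.continuous_eval g).measurable measurable_const)
        (by rw [hν_lt t ht ht1]; exact ENNReal.ofReal_ne_top),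
        hν_univ, hν_lt t ht ht1,
        ← ENNReal.ofReal_sub _ (by positivity : (0:ℝ) ≤ t ^ q * A)]
      congr 1
      ring
    · rw [indicator_of_notMem (fun hmem => ht1 hmem.2)]
      rw [hν_apply _ (measurableSet_le measurable_const
        (MvPolynomial.continuous_eval g).measurable)]
      have hempty : {x : Fin n → ℝ | t ≤ eval x g} ∩ {x : Fin n → ℝ | eval x g ≤ 1} = ∅ := by
        ext x
        simp only [mem_inter_iff, mem_setOf_eq, mem_empty_iff_false, iff_false, not_and]
        intro h1 h2
        push_neg at ht1
        linarith
      rw [hempty]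
      simp
  have hlc := lintegral_eq_lintegral_meas_le ν
    (Eventually.of_forall hgA) (MvPolynomial.continuous_eval g).measurable.aemeasurable
  have hL : ∫⁻ x, ENNReal.ofReal (eval x g) ∂ν
      = ENNReal.ofReal (∫ x in {x : Fin n → ℝ | eval x g ≤ 1}, |eval x h| * eval x g) := by
    rw [hν_def, lintegral_withDensity_eq_lintegral_mul _ hwm
      ((MvPolynomial.continuous_eval g).measurable.ennreal_ofReal)]
    rw [ofReal_integral_eq_lintegral_ofReal hIntHG
      (Eventually.of_forall fun x => mul_nonneg (abs_nonneg _) (hgA x))]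
    refine lintegral_congr fun x => ?_
    simp only [Pi.mul_apply, hw_def]
    rw [← ENNReal.ofReal_mul (abs_nonneg _)]
  have hIoc : IntegrableOn (fun t : ℝ => (1 - t ^ q) * A) (Ioc (0:ℝ) 1) := by
    have : IntervalIntegrable (fun t : ℝ => (1 - t ^ q) * A) volume 0 1 :=
      (intervalIntegrable_const.sub (intervalIntegral.intervalIntegrable_rpow'
        (by linarith : (-1:ℝ) < q))).mul_const A
    exact this.1
  have hR : ∫⁻ t in Ioi (0:ℝ), ν {x : Fin n → ℝ | t ≤ eval x g}
      = ENNReal.ofReal ((1 - 1 / (q + 1)) * A) := by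
    rw [setLIntegral_congr_fun measurableSet_Ioi hν_ge]
    rw [lintegral_indicator measurableSet_Ioc _, Measure.restrict_restrict measurableSet_Ioc,
      inter_eq_self_of_subset_left Ioc_subset_Ioi_self]
    rw [← ofReal_integral_eq_lintegral_ofReal hIoc
      ((ae_restrict_iff' measurableSet_Ioc).mpr (Eventually.of_forall fun t ht =>
        mul_nonneg (by
          have := Real.rpow_le_one ht.1.le ht.2 hq0.le
          linarith) hA0))]
    congr 1
    rw [← intervalIntegral.integral_of_le zero_le_one,
      intervalIntegral.integral_mul_const,
      intervalIntegral.integral_sub intervalIntegrable_const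
        (intervalIntegral.intervalIntegrable_rpow' (by linarith : (-1:ℝ) < q))]
    have hint : (∫ x in (0:ℝ)..1, x ^ q) = 1 / (q + 1) := by
      rw [integral_rpow (Or.inl (by linarith : (-1:ℝ) < q)), Real.one_rpow,
        Real.zero_rpow (by positivity : q + 1 ≠ 0)]
      norm_num
    rw [hint]
    norm_num
  rw [hL, hR] at hlc
  have hfinal : ∫ x in {x : Fin n → ℝ | eval x g ≤ 1}, |eval x h| * eval x g
      = (1 - 1 / (q + 1)) * A := by
    have hlhs : 0 ≤ ∫ x in {x : Fin n → ℝ | eval x g ≤ 1}, |eval x h| * eval x g :=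
      setIntegral_nonneg (hGm 1) fun x _ => mul_nonneg (abs_nonneg _) (hgA x)
    have hrhs : 0 ≤ (1 - 1 / (q + 1)) * A := by
      have : 1 / (q + 1) ≤ 1 := by
        rw [div_le_one (by linarith)]
        linarith
      exact mul_nonneg (by linarith) hA0
    exact (ENNReal.ofReal_eq_ofReal_iff hlhs hrhs).mp hlc
  rw [hfinal]
  have h2 : (0:ℝ) < (n : ℝ) + 2 * d := by positivity
  have h3 : (1:ℝ) - 1 / (q + 1) = ((n:ℝ) + d) / ((n:ℝ) + 2 * d) := by
    rw [hq_def]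
    rw [div_add' _ _ _ (ne_of_gt hd0), one_div_div]
    rw [eq_div_iff (ne_of_gt h2), sub_mul, div_mul_eq_mul_div, mul_comm]
    field_simp
    ring
  rw [h3]
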